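/- Let (a_i)_{i≥1} be generators and R_n = {a_{i-1} = a_i w_i a_i : 2 ≤ i ≤ n} with each w_i a word in {a_1,…,a_i}. If each finitely generated monoid M_n = ⟨a_1,…,a_n | R_n⟩⁺ is of O-type, then the natural maps M_n → M_m (n ≤ m) are injective, the monoid M = ⟨a_1, a_2, … | ∪R_n⟩⁺ is the direct limit (union) of the M_n, and M is of O-type; consequently M \ {1} is the positive cone of a left-invariant ordering on the group with the same presentation. -/

import Mathlib

namespace Stmt19

/-! Generators `a₀, a₁, a₂, …` indexed by `ℕ`; for `i ≥ 1` the triangular relation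
`a_{i-1} = a_i w_i a_i`, where `w i` is a word in the letters `a₀, …, a_i`. -/

/-- The relations of level `≤ n` (as a relation on positive words). -/
def rel (w : ℕ → List ℕ) (n : ℕ) (u v : List ℕ) : Prop :=
  ∃ i : ℕ, 1 ≤ i ∧ i ≤ n ∧ u = [i - 1] ∧ v = i :: (w i ++ [i])

/-- All the relations. -/
def relAll (w : ℕ → List ℕ) (u v : List ℕ) : Prop :=
  ∃ i : ℕ, 1 ≤ i ∧ u = [i - 1] ∧ v = i :: (w i ++ [i])

/-- The congruence of `⟨a₀, …, a_n | R_n⟩⁺` on positive words. -/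
def cn (w : ℕ → List ℕ) (n : ℕ) : Con (FreeMonoid ℕ) :=
  conGen (fun a b => rel w n (FreeMonoid.toList a) (FreeMonoid.toList b))

/-- The congruence of `⟨a₀, a₁, … | ⋃ R_n⟩⁺`. -/
def call (w : ℕ → List ℕ) : Con (FreeMonoid ℕ) :=
  conGen (fun a b => relAll w (FreeMonoid.toList a) (FreeMonoid.toList b))

/-- Words using only the letters `a₀, …, a_n`. -/
def Bdd (n : ℕ) (u : List ℕ) : Prop := ∀ k ∈ u, k ≤ n

/-- Word-level statement that the monoid `M_n = ⟨a₀, …, a_n | R_n⟩⁺` is of `O`-type. -/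
def OTn (w : ℕ → List ℕ) (n : ℕ) : Prop :=
  (∀ u v v' : List ℕ, Bdd n u → Bdd n v → Bdd n v' →
    cn w n (FreeMonoid.ofList (u ++ v)) (FreeMonoid.ofList (u ++ v')) →
    cn w n (FreeMonoid.ofList v) (FreeMonoid.ofList v')) ∧
  (∀ u u' v : List ℕ, Bdd n u → Bdd n u' → Bdd n v →
    cn w n (FreeMonoid.ofList (u ++ v)) (FreeMonoid.ofList (u' ++ v)) →
    cn w n (FreeMonoid.ofList u) (FreeMonoid.ofList u')) ∧
  (∀ u v : List ℕ, Bdd n u → Bdd n v →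
    cn w n (FreeMonoid.ofList (u ++ v)) (FreeMonoid.ofList []) →
    cn w n (FreeMonoid.ofList u) (FreeMonoid.ofList [])) ∧
  (∀ u v : List ℕ, Bdd n u → Bdd n v →
    (∃ t, Bdd n t ∧ cn w n (FreeMonoid.ofList (u ++ t)) (FreeMonoid.ofList v)) ∨
    (∃ t, Bdd n t ∧ cn w n (FreeMonoid.ofList (v ++ t)) (FreeMonoid.ofList u))) ∧
  (∀ u v : List ℕ, Bdd n u → Bdd n v →
    (∃ t, Bdd n t ∧ cn w n (FreeMonoid.ofList (t ++ u)) (FreeMonoid.ofList v)) ∨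
    (∃ t, Bdd n t ∧ cn w n (FreeMonoid.ofList (t ++ v)) (FreeMonoid.ofList u)))

/-- The direct-limit monoid `M = ⟨a₀, a₁, … | ⋃ R_n⟩⁺`. -/
def MAll (w : ℕ → List ℕ) : Type := (call w).Quotient

instance (w : ℕ → List ℕ) : Monoid (MAll w) :=
  inferInstanceAs (Monoid (call w).Quotient)

/-- The group with the same presentation. -/
def GAll (w : ℕ → List ℕ) : Type :=
  PresentedGroup {x : FreeGroup ℕ | ∃ i : ℕ, 1 ≤ i ∧
    x = FreeGroup.of (i - 1) *
      (FreeGroup.of i * ((w i).map FreeGroup.of).prod * FreeGroup.of i)⁻¹}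

instance (w : ℕ → List ℕ) : Group (GAll w) :=
  inferInstanceAs (Group (PresentedGroup _))

/-- The image in `GAll w` of the generator `a_k`. -/
def gen (w : ℕ → List ℕ) (k : ℕ) : GAll w :=
  (PresentedGroup.of k : PresentedGroup _)

section Aux
variable (w : ℕ → List ℕ)

lemma cn_mono {n m : ℕ} (h : n ≤ m) : cn w n ≤ cn w m :=
  Con.conGen_le.mpr fun x y hxy => by
    obtain ⟨i, h1, h2, h3, h4⟩ := hxy
    exact ConGen.Rel.of x y ⟨i, h1, h2.trans h, h3, h4⟩

lemma cn_le_call (n : ℕ) : cn w n ≤ call w :=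
  Con.conGen_le.mpr fun x y hxy => by
    obtain ⟨i, h1, _, h3, h4⟩ := hxy
    exact ConGen.Rel.of x y ⟨i, h1, h3, h4⟩

/-- The union congruence. -/
private def cUnion : Con (FreeMonoid ℕ) where
  r a b := ∃ n, cn w n a b
  iseqv := by
    refine ⟨fun a => ⟨0, (cn w 0).refl a⟩, fun ⟨n, h⟩ => ⟨n, (cn w n).symm h⟩, ?_⟩
    rintro a b c ⟨n, h⟩ ⟨m, h'⟩
    exact ⟨max n m, (cn w (max n m)).trans (cn_mono w (le_max_left n m) h)
      (cn_mono w (le_max_right n m) h')⟩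
  mul' := by
    rintro a b c d ⟨n, h⟩ ⟨m, h'⟩
    exact ⟨max n m, (cn w (max n m)).mul (cn_mono w (le_max_left n m) h)
      (cn_mono w (le_max_right n m) h')⟩

lemma call_iff_exists {x y : FreeMonoid ℕ} : call w x y ↔ ∃ n, cn w n x y := by
  constructor
  · intro h
    refine Con.le_def.mp ((Con.conGen_le (c := cUnion w)).mpr ?_) h
    rintro a b ⟨i, h1, h3, h4⟩
    exact ⟨i, ConGen.Rel.of a b ⟨i, h1, le_rfl, h3, h4⟩⟩
  · rintro ⟨n, h⟩
    exact cn_le_call w n h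

lemma fm_mul_eq_one {a b : FreeMonoid ℕ} : a * b = 1 ↔ a = 1 ∧ b = 1 := by
  constructor
  · intro h
    have h' : FreeMonoid.toList a ++ FreeMonoid.toList b = ([] : List ℕ) := by
      simpa using congrArg FreeMonoid.toList h
    rcases List.append_eq_nil_iff.mp h' with ⟨ha, hb⟩
    constructor
    · simpa using congrArg FreeMonoid.ofList ha
    · simpa using congrArg FreeMonoid.ofList hb
  · rintro ⟨rfl, rfl⟩; simp

/-- The class of the empty word is a singleton, for any presentation whose
relation has no empty side. -/
lemma eq_one_of_conGen {r : FreeMonoid ℕ → FreeMonoid ℕ → Prop}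
    (hr : ∀ a b, r a b → a ≠ 1 ∧ b ≠ 1) {x : FreeMonoid ℕ}
    (h : conGen r x 1) : x = 1 := by
  let c : Con (FreeMonoid ℕ) :=
    { r := fun a b => (a = 1 ↔ b = 1)
      iseqv := ⟨fun _ => Iff.rfl, Iff.symm, Iff.trans⟩
      mul' := by
        intro a b a' b' h1 h2
        change a = 1 ↔ b = 1 at h1
        change a' = 1 ↔ b' = 1 at h2
        change a * a' = 1 ↔ b * b' = 1
        rw [fm_mul_eq_one, fm_mul_eq_one]
        exact and_congr h1 h2 }
  have hle := (Con.conGen_le (c := c)).mpr (fun a b hab => by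
    obtain ⟨ha, hb⟩ := hr a b hab
    exact iff_of_false ha hb)
  have := Con.le_def.mp hle h
  exact this.mpr rfl

lemma toList_ne_nil {i : ℕ} (l : List ℕ) : (i :: l) ≠ ([] : List ℕ) := by simp

lemma cn_one_iff {n : ℕ} {u : List ℕ} (h : cn w n (FreeMonoid.ofList u) 1) : u = [] := by
  have := eq_one_of_conGen (r := fun a b => rel w n (FreeMonoid.toList a) (FreeMonoid.toList b))
    (fun a b hab => by
      obtain ⟨i, h1, h2, h3, h4⟩ := hab
      constructor
      · intro hc; rw [hc] at h3; simp at h3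
      · intro hc; rw [hc] at h4; simp at h4) h
  simpa using congrArg FreeMonoid.toList this

lemma call_one_iff {u : List ℕ} (h : call w (FreeMonoid.ofList u) 1) : u = [] := by
  have := eq_one_of_conGen (r := fun a b => relAll w (FreeMonoid.toList a) (FreeMonoid.toList b))
    (fun a b hab => by
      obtain ⟨i, h1, h3, h4⟩ := hab
      constructor
      · intro hc; rw [hc] at h3; simp at h3
      · intro hc; rw [hc] at h4; simp at h4) h
  simpa using congrArg FreeMonoid.toList this

lemma bdd_foldr (u : List ℕ) : Bdd (u.foldr max 0) u := by
  induction u with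
  | nil => intro k hk; simp at hk
  | cons a t ih =>
    intro k hk
    rcases List.mem_cons.mp hk with rfl | hk
    · exact le_max_left _ _
    · exact le_trans (ih k hk) (le_max_right _ _)

lemma Bdd.mono {n m : ℕ} (h : n ≤ m) {u : List ℕ} (hu : Bdd n u) : Bdd m u :=
  fun k hk => (hu k hk).trans h

lemma Bdd.append {n : ℕ} {u v : List ℕ} (hu : Bdd n u) (hv : Bdd n v) : Bdd n (u ++ v) := by
  intro k hk
  rcases List.mem_append.mp hk with h | h
  · exact hu k h
  · exact hv k h

end Aux

section Aux2
variable (w : ℕ → List ℕ)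

/-- Part (a): the key injectivity lemma. -/
lemma part_a (hOT : ∀ n : ℕ, OTn w n) {n m : ℕ} (hnm : n ≤ m) {u v : List ℕ}
    (hu : Bdd n u) (hv : Bdd n v)
    (h : cn w m (FreeMonoid.ofList u) (FreeMonoid.ofList v)) :
    cn w n (FreeMonoid.ofList u) (FreeMonoid.ofList v) := by
  have hnil : ∀ (t : List ℕ) (x y : List ℕ), Bdd m x → Bdd m t →
      cn w m (FreeMonoid.ofList (x ++ t)) (FreeMonoid.ofList x) → t = [] := by
    intro t x y hx ht hxt
    have h2 : cn w m (FreeMonoid.ofList (x ++ t)) (FreeMonoid.ofList (x ++ [])) := by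
      rw [List.append_nil]; exact hxt
    have h3 := (hOT m).1 x t [] hx ht (fun k hk => by simp at hk) h2
    exact cn_one_iff w h3
  rcases (hOT n).2.2.2.1 u v hu hv with ⟨t, ht, h1⟩ | ⟨t, ht, h1⟩
  · have hm1 : cn w m (FreeMonoid.ofList (u ++ t)) (FreeMonoid.ofList u) :=
      (cn w m).trans (cn_mono w hnm h1) ((cn w m).symm h)
    have : t = [] := hnil t u v (hu.mono hnm) (ht.mono hnm) hm1
    subst this
    rw [List.append_nil] at h1
    exact h1
  · have hm1 : cn w m (FreeMonoid.ofList (v ++ t)) (FreeMonoid.ofList v) :=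
      (cn w m).trans (cn_mono w hnm h1) h
    have : t = [] := hnil t v u (hv.mono hnm) (ht.mono hnm) hm1
    subst this
    rw [List.append_nil] at h1
    exact (cn w n).symm h1

/-- The class of a word in `MAll w`. -/
def toM (u : List ℕ) : MAll w := ((FreeMonoid.ofList u : FreeMonoid ℕ) : (call w).Quotient)

/-- Every element of `MAll w` is the class of a word. -/
lemma exists_word (a : MAll w) :
    ∃ u : List ℕ, a = toM w u := by
  obtain ⟨x, hx⟩ := Quotient.exists_rep (show (call w).Quotient from a)
  refine ⟨FreeMonoid.toList x, ?_⟩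
  show a = ((FreeMonoid.ofList (FreeMonoid.toList x) : FreeMonoid ℕ) : (call w).Quotient)
  rw [FreeMonoid.ofList_toList]
  exact hx.symm

lemma call_of_cn {n : ℕ} {x y : FreeMonoid ℕ} (h : cn w n x y) : call w x y :=
  cn_le_call w n h

lemma coe_eq_iff {u v : List ℕ} :
    toM w u = toM w v ↔
    call w (FreeMonoid.ofList u) (FreeMonoid.ofList v) := Con.eq _

lemma coe_mul_eq (u v : List ℕ) :
    toM w u * toM w v = toM w (u ++ v) := rfl

/-- Left cancellation in `MAll`. -/
lemma mall_cancel_left (hOT : ∀ n : ℕ, OTn w n) :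
    ∀ a b c : MAll w, a * b = a * c → b = c := by
  intro a b c h
  obtain ⟨u, rfl⟩ := exists_word w a
  obtain ⟨v, rfl⟩ := exists_word w b
  obtain ⟨v', rfl⟩ := exists_word w c
  rw [coe_mul_eq, coe_mul_eq, coe_eq_iff, call_iff_exists] at h
  obtain ⟨n, hn⟩ := h
  set N := max n (max ((u ++ v).foldr max 0) ((u ++ v').foldr max 0)) with hN
  have hb1 : Bdd N (u ++ v) := (bdd_foldr (u ++ v)).mono ((le_max_left _ _).trans (le_max_right _ _))
  have hb2 : Bdd N (u ++ v') := (bdd_foldr (u ++ v')).mono ((le_max_right _ _).trans (le_max_right _ _))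
  have hu : Bdd N u := fun k hk => hb1 k (List.mem_append_left _ hk)
  have hv : Bdd N v := fun k hk => hb1 k (List.mem_append_right _ hk)
  have hv' : Bdd N v' := fun k hk => hb2 k (List.mem_append_right _ hk)
  have h2 := (hOT N).1 u v v' hu hv hv' (cn_mono w (le_max_left _ _) hn)
  rw [coe_eq_iff]
  exact call_of_cn w h2

/-- Right cancellation in `MAll`. -/
lemma mall_cancel_right (hOT : ∀ n : ℕ, OTn w n) :
    ∀ a b c : MAll w, a * c = b * c → a = b := by
  intro a b c h
  obtain ⟨u, rfl⟩ := exists_word w a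
  obtain ⟨u', rfl⟩ := exists_word w b
  obtain ⟨v, rfl⟩ := exists_word w c
  rw [coe_mul_eq, coe_mul_eq, coe_eq_iff, call_iff_exists] at h
  obtain ⟨n, hn⟩ := h
  set N := max n (max ((u ++ v).foldr max 0) ((u' ++ v).foldr max 0)) with hN
  have hb1 : Bdd N (u ++ v) := (bdd_foldr (u ++ v)).mono ((le_max_left _ _).trans (le_max_right _ _))
  have hb2 : Bdd N (u' ++ v) := (bdd_foldr (u' ++ v)).mono ((le_max_right _ _).trans (le_max_right _ _))
  have hu : Bdd N u := fun k hk => hb1 k (List.mem_append_left _ hk)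
  have hu' : Bdd N u' := fun k hk => hb2 k (List.mem_append_left _ hk)
  have hv : Bdd N v := fun k hk => hb1 k (List.mem_append_right _ hk)
  have h2 := (hOT N).2.1 u u' v hu hu' hv (cn_mono w (le_max_left _ _) hn)
  rw [coe_eq_iff]
  exact call_of_cn w h2

lemma mall_one_eq : (1 : MAll w) = toM w [] := rfl

lemma mall_eq_one_iff {u : List ℕ} :
    toM w u = (1 : MAll w) ↔ u = [] := by
  rw [mall_one_eq, coe_eq_iff]
  constructor
  · intro h; exact call_one_iff w h
  · rintro rfl; exact (call w).refl _

/-- Conicity in `MAll`. -/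
lemma mall_conic : ∀ a b : MAll w, a * b = 1 → a = 1 := by
  intro a b h
  obtain ⟨u, rfl⟩ := exists_word w a
  obtain ⟨v, rfl⟩ := exists_word w b
  rw [coe_mul_eq, mall_eq_one_iff] at h
  rw [mall_eq_one_iff]
  exact (List.append_eq_nil_iff.mp h).1

/-- Totality of left divisibility in `MAll`. -/
lemma mall_dvd_total (hOT : ∀ n : ℕ, OTn w n) :
    ∀ g h : MAll w, g ∣ h ∨ h ∣ g := by
  intro g h
  obtain ⟨u, rfl⟩ := exists_word w g
  obtain ⟨v, rfl⟩ := exists_word w h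
  set N := max (u.foldr max 0) (v.foldr max 0) with hN
  have hu : Bdd N u := (bdd_foldr u).mono (le_max_left _ _)
  have hv : Bdd N v := (bdd_foldr v).mono (le_max_right _ _)
  rcases (hOT N).2.2.2.1 u v hu hv with ⟨t, _, h1⟩ | ⟨t, _, h1⟩
  · left
    exact ⟨toM w t, by
      rw [coe_mul_eq, coe_eq_iff]
      exact (call w).symm (call_of_cn w h1)⟩
  · right
    exact ⟨toM w t, by
      rw [coe_mul_eq, coe_eq_iff]
      exact (call w).symm (call_of_cn w h1)⟩

/-- Totality of right divisibility in `MAll`. -/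
lemma mall_dvd_total' (hOT : ∀ n : ℕ, OTn w n) :
    ∀ g h : MAll w, (∃ c, h = c * g) ∨ (∃ c, g = c * h) := by
  intro g h
  obtain ⟨u, rfl⟩ := exists_word w g
  obtain ⟨v, rfl⟩ := exists_word w h
  set N := max (u.foldr max 0) (v.foldr max 0) with hN
  have hu : Bdd N u := (bdd_foldr u).mono (le_max_left _ _)
  have hv : Bdd N v := (bdd_foldr v).mono (le_max_right _ _)
  rcases (hOT N).2.2.2.2 u v hu hv with ⟨t, _, h1⟩ | ⟨t, _, h1⟩
  · left
    exact ⟨toM w t, by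
      rw [coe_mul_eq, coe_eq_iff]
      exact (call w).symm (call_of_cn w h1)⟩
  · right
    exact ⟨toM w t, by
      rw [coe_mul_eq, coe_eq_iff]
      exact (call w).symm (call_of_cn w h1)⟩

end Aux2

section AuxG
variable (w : ℕ → List ℕ)

def rels (w : ℕ → List ℕ) : Set (FreeGroup ℕ) :=
  {x : FreeGroup ℕ | ∃ i : ℕ, 1 ≤ i ∧
    x = FreeGroup.of (i - 1) *
      (FreeGroup.of i * ((w i).map FreeGroup.of).prod * FreeGroup.of i)⁻¹}

lemma gall_eq : GAll w = PresentedGroup (rels w) := rfl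

/-- The quotient map from the free group. -/
def mkG : FreeGroup ℕ →* PresentedGroup (rels w) :=
  QuotientGroup.mk' (Subgroup.normalClosure (rels w))

lemma gen_eq_mkG (k : ℕ) : gen w k = mkG w (FreeGroup.of k) := rfl

lemma gen_rel {i : ℕ} (hi : 1 ≤ i) :
    gen w (i - 1) = gen w i * ((w i).map (gen w)).prod * gen w i := by
  have hmem : FreeGroup.of (i - 1) *
      (FreeGroup.of i * ((w i).map FreeGroup.of).prod * FreeGroup.of i)⁻¹ ∈ rels w :=
    ⟨i, hi, rfl⟩
  have h1 : mkG w (FreeGroup.of (i - 1) *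
      (FreeGroup.of i * ((w i).map FreeGroup.of).prod * FreeGroup.of i)⁻¹) = 1 :=
    (QuotientGroup.eq_one_iff _).mpr (Subgroup.subset_normalClosure hmem)
  rw [map_mul, map_inv, mul_inv_eq_one] at h1
  rw [gen_eq_mkG, h1, map_mul, map_mul, map_list_prod, List.map_map]
  rfl

def genH : FreeMonoid ℕ →* GAll w := FreeMonoid.lift (gen w)

lemma genH_ofList (u : List ℕ) :
    genH w (FreeMonoid.ofList u) = (u.map (gen w)).prod := by
  rw [genH, FreeMonoid.lift_apply, FreeMonoid.toList_ofList]

lemma call_le_kerGenH : call w ≤ Con.ker (genH w) := by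
  apply Con.conGen_le.mpr
  intro x y hxy
  obtain ⟨i, hi, hx, hy⟩ := hxy
  rw [Con.ker_rel]
  have hx' : x = FreeMonoid.ofList [i - 1] := by rw [← FreeMonoid.ofList_toList x, hx]
  have hy' : y = FreeMonoid.ofList (i :: (w i ++ [i])) := by rw [← FreeMonoid.ofList_toList y, hy]
  subst hx'; subst hy'
  rw [genH_ofList, genH_ofList]
  simp only [List.map_cons, List.map_append, List.map_singleton, List.prod_cons,
    List.prod_append, List.prod_singleton, List.prod_nil, mul_one]
  rw [gen_rel w hi]
  simp [mul_assoc]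

def phiM : MAll w →* GAll w := (call w).lift (genH w) (call_le_kerGenH w)

lemma phiM_coe (u : List ℕ) :
    phiM w (toM w u) = (u.map (gen w)).prod := by
  show genH w (FreeMonoid.ofList u) = _
  exact genH_ofList w u

end AuxG


section AuxOre
variable (w : ℕ → List ℕ)

lemma phiM_injective (hOT : ∀ n : ℕ, OTn w n) : Function.Injective (phiM w) := by
  classical
  have ore : ∀ (r s : MAll w), ∃ pq : MAll w × MAll w, pq.2 * r = pq.1 * s := by
    intro r s
    rcases mall_dvd_total' w hOT r s with ⟨c, hc⟩ | ⟨c, hc⟩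
    · exact ⟨(1, c), by rw [hc, one_mul]⟩
    · exact ⟨(c, 1), by rw [hc, one_mul]⟩
  choose pq hpq using ore
  letI oset : OreLocalization.OreSet (⊤ : Submonoid (MAll w)) :=
    { ore_right_cancel := fun r₁ r₂ s h => ⟨1, by
        simp only [OneMemClass.coe_one, one_mul]
        exact mall_cancel_right w hOT r₁ r₂ (↑s) h⟩
      oreNum := fun r s => (pq r (↑s)).1
      oreDenom := fun r s => ⟨(pq r (↑s)).2, trivial⟩
      ore_eq := fun r s => hpq r (↑s) }
  set T := OreLocalization (⊤ : Submonoid (MAll w)) (MAll w) with hT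
  let ν : MAll w →* T := OreLocalization.numeratorHom
  have hνinj : Function.Injective ν := by
    intro a b h
    rw [show ν a = a /ₒ (1 : (⊤ : Submonoid (MAll w))) from OreLocalization.numeratorHom_apply,
      show ν b = b /ₒ (1 : (⊤ : Submonoid (MAll w))) from OreLocalization.numeratorHom_apply,
      OreLocalization.oreDiv_eq_iff] at h
    obtain ⟨u, v, h1, h2⟩ := h
    rw [OneMemClass.coe_one, mul_one, mul_one] at h2
    rw [Submonoid.smul_def, smul_eq_mul, smul_eq_mul, h2] at h1
    exact (mall_cancel_left w hOT v b a h1).symm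
  have hunit : ∀ x : MAll w, IsUnit (ν x) := fun x =>
    OreLocalization.numerator_isUnit (⟨x, trivial⟩ : (⊤ : Submonoid (MAll w)))
  choose U hU using hunit
  let fU : ℕ → Tˣ := fun k => U (toM w [k])
  have hfU : ∀ k, ((fU k : Tˣ) : T) = ν (toM w [k]) := fun k => hU _
  have prod_val : ∀ l : List ℕ, (((List.map fU l).prod : Tˣ) : T) = ν (toM w l) := by
    intro l
    induction l with
    | nil =>
      show ((1 : Tˣ) : T) = ν (toM w [])
      rw [Units.val_one]
      exact (map_one ν).symm
    | cons a t ih =>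
      rw [List.map_cons, List.prod_cons, Units.val_mul, hfU, ih, ← map_mul, coe_mul_eq]
      rfl
  have hrel : ∀ r ∈ rels w, FreeGroup.lift fU r = 1 := by
    rintro r ⟨i, hi, rfl⟩
    rw [map_mul, map_inv, mul_inv_eq_one, map_mul, map_mul, map_list_prod, List.map_map]
    have hmap : (List.map (⇑(FreeGroup.lift fU) ∘ FreeGroup.of) (w i)) = List.map fU (w i) := by
      apply List.map_congr_left; intro k _
      simp [Function.comp, FreeGroup.lift_apply_of]
    rw [hmap, FreeGroup.lift_apply_of, FreeGroup.lift_apply_of]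
    apply Units.ext
    rw [Units.val_mul, Units.val_mul, hfU, hfU, prod_val, ← map_mul, ← map_mul,
      coe_mul_eq, coe_mul_eq]
    rw [show ([i - 1] : List ℕ) = FreeMonoid.toList (FreeMonoid.ofList [i-1]) from
      (FreeMonoid.toList_ofList _).symm] -- no-op guard
    apply congrArg ν
    rw [coe_eq_iff]
    apply call_of_cn w (n := i)
    refine ConGen.Rel.of _ _ ?_
    refine ⟨i, hi, le_rfl, ?_, ?_⟩
    · simp
    · simp
  let ψG : PresentedGroup (rels w) →* Tˣ := PresentedGroup.toGroup hrel
  have hgen : ∀ k, ψG (gen w k) = fU k := fun k => PresentedGroup.toGroup.of hrel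
  have key : ∀ x : MAll w, ((ψG (phiM w x) : Tˣ) : T) = ν x := by
    intro x
    obtain ⟨u, rfl⟩ := exists_word w x
    rw [phiM_coe]
    show ((ψG ((List.map (gen w) u : List (PresentedGroup (rels w))).prod) : Tˣ) : T) = _
    rw [map_list_prod]
    erw [List.map_map]
    have hmap : List.map (⇑ψG ∘ gen w) u = List.map fU u := by
      apply List.map_congr_left; intro k _
      simp only [Function.comp]
      exact hgen k
    rw [hmap, prod_val]
  intro a b h
  apply hνinj
  rw [← key a, ← key b, h]

end AuxOre

/-- **Proposition 10.16.** Suppose each `w i` (for `i ≥ 1`) is a word in `a₀, …, a_i`,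
and each finitely generated monoid `M_n = ⟨a₀, …, a_n | R_n⟩⁺` is of `O`-type. Then the
natural maps `M_n → M_m` (`n ≤ m`) are injective, the monoid `M = ⟨a₀, a₁, … | ⋃ R_n⟩⁺`
is the direct limit (union) of the `M_n`, `M` is of `O`-type, and `M \ {1}` is the
positive cone of a left-invariant ordering on the group with the same presentation. -/
theorem stmt_19 (w : ℕ → List ℕ) (hw : ∀ i : ℕ, 1 ≤ i → ∀ k ∈ w i, k ≤ i)
    (hOT : ∀ n : ℕ, OTn w n) :
    -- (a) injectivity of the natural maps `M_n → M_m`: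
    (∀ n m : ℕ, n ≤ m → ∀ u v : List ℕ, Bdd n u → Bdd n v →
      cn w m (FreeMonoid.ofList u) (FreeMonoid.ofList v) →
      cn w n (FreeMonoid.ofList u) (FreeMonoid.ofList v)) ∧
    -- (b) `M` is the direct limit (union) of the `M_n`:
    (∀ u v : List ℕ,
      call w (FreeMonoid.ofList u) (FreeMonoid.ofList v) ↔
      ∃ n : ℕ, cn w n (FreeMonoid.ofList u) (FreeMonoid.ofList v)) ∧
    -- (c) `M` is of `O`-type:
    ((∀ a b c : MAll w, a * b = a * c → b = c) ∧
     (∀ a b c : MAll w, a * c = b * c → a = b) ∧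
     (∀ a b : MAll w, a * b = 1 → a = 1) ∧
     (∀ g h : MAll w, g ∣ h ∨ h ∣ g) ∧
     (∀ g h : MAll w, (∃ c, h = c * g) ∨ (∃ c, g = c * h))) ∧
    -- (d) `M \ {1}` is the positive cone of a left-invariant ordering on the group:
    (∃ r : GAll w → GAll w → Prop, IsStrictTotalOrder (GAll w) r ∧
      (∀ h g g' : GAll w, r g g' → r (h * g) (h * g')) ∧
      (∀ g : GAll w, r 1 g ↔ ∃ u : List ℕ, u ≠ [] ∧ g = (u.map (gen w)).prod)) := by
  have hinj := phiM_injective w hOT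
  -- every element of the group is a left fraction
  have hsub : ∀ g : GAll w, ∃ a b : MAll w, g = (phiM w a)⁻¹ * phiM w b := by
    let S : Subgroup (GAll w) :=
      { carrier := {g | ∃ a b : MAll w, g = (phiM w a)⁻¹ * phiM w b}
        one_mem' := ⟨1, 1, by simp⟩
        mul_mem' := by
          rintro x y ⟨a, b, rfl⟩ ⟨c, d, rfl⟩
          obtain ⟨s, t, hst⟩ : ∃ s t : MAll w, s * b = t * c := by
            rcases mall_dvd_total' w hOT b c with ⟨e, he⟩ | ⟨e, he⟩
            · exact ⟨e, 1, by rw [← he, one_mul]⟩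
            · exact ⟨1, e, by rw [← he, one_mul]⟩
          refine ⟨s * a, t * d, ?_⟩
          have hkey : phiM w s * phiM w b = phiM w t * phiM w c := by
            rw [← map_mul, ← map_mul, hst]
          have hb : phiM w b = (phiM w s)⁻¹ * (phiM w t * phiM w c) := by
            rw [← hkey, inv_mul_cancel_left]
          rw [hb, map_mul, map_mul, mul_inv_rev]
          group
        inv_mem' := by
          rintro x ⟨a, b, rfl⟩
          exact ⟨b, a, by rw [mul_inv_rev, inv_inv]⟩ }
    have hS : S = ⊤ := by
      erw [eq_top_iff, ← PresentedGroup.closure_range_of (rels w)]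
      apply Subgroup.closure_le (K := S) |>.mpr
      rintro g ⟨k, rfl⟩
      refine ⟨1, toM w [k], ?_⟩
      rw [map_one, inv_one, one_mul, phiM_coe]
      simp only [List.map_cons, List.map_nil, List.prod_cons, List.prod_nil, mul_one]
      rfl
    intro g
    have : g ∈ S := hS ▸ Subgroup.mem_top g
    exact this
  have htri : ∀ g : GAll w, (∃ x : MAll w, g = phiM w x) ∨ (∃ x : MAll w, g⁻¹ = phiM w x) := by
    intro g
    obtain ⟨a, b, rfl⟩ := hsub g
    rcases mall_dvd_total w hOT a b with ⟨t, ht⟩ | ⟨t, ht⟩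
    · left; exact ⟨t, by rw [ht, map_mul, inv_mul_cancel_left]⟩
    · right; exact ⟨t, by rw [mul_inv_rev, inv_inv, ht, map_mul, inv_mul_cancel_left]⟩
  -- the positive cone
  set P : GAll w → Prop := fun g => ∃ x : MAll w, x ≠ 1 ∧ g = phiM w x with hPdef
  have hP1 : ¬ P 1 := by
    rintro ⟨x, hx, h⟩
    exact hx (hinj (by rw [← h, map_one]))
  have hPmul : ∀ {g h : GAll w}, P g → P h → P (g * h) := by
    rintro g h ⟨x, hx, rfl⟩ ⟨y, hy, rfl⟩
    exact ⟨x * y, fun hc => hx (mall_conic w x y hc), (map_mul _ _ _).symm⟩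
  have hPtotal : ∀ g : GAll w, P g ∨ g = 1 ∨ P g⁻¹ := by
    intro g
    rcases htri g with ⟨x, hgx⟩ | ⟨x, hgx⟩
    · by_cases hx : x = 1
      · right; left; rw [hgx, hx, map_one]
      · left; exact ⟨x, hx, hgx⟩
    · by_cases hx : x = 1
      · right; left
        have : g⁻¹ = 1 := by rw [hgx, hx, map_one]
        rw [← inv_inv g, this, inv_one]
      · right; right; exact ⟨x, hx, hgx⟩
  refine ⟨fun n m hnm u v hu hv h => part_a w hOT hnm hu hv h,
    fun u v => call_iff_exists w,
    ⟨mall_cancel_left w hOT, mall_cancel_right w hOT, fun a b h => mall_conic w a b h,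
      mall_dvd_total w hOT, mall_dvd_total' w hOT⟩, ?_⟩
  refine ⟨fun g g' => P (g⁻¹ * g'), ?_, ?_, ?_⟩
  · haveI htr : IsTrichotomous (GAll w) (fun g g' => P (g⁻¹ * g')) := by
      constructor
      intro a b
      suffices H : P (a⁻¹ * b) ∨ a = b ∨ P (b⁻¹ * a) from
        fun hab hba => (H.resolve_left hab).resolve_right hba
      rcases hPtotal (a⁻¹ * b) with h | h | h
      · exact Or.inl h
      · exact Or.inr (Or.inl (by rwa [inv_mul_eq_one] at h))
      · refine Or.inr (Or.inr ?_)
        rwa [mul_inv_rev, inv_inv] at h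
    haveI hirr : IsIrrefl (GAll w) (fun g g' => P (g⁻¹ * g')) := by
      constructor
      intro a ha
      rw [inv_mul_cancel] at ha
      exact hP1 ha
    haveI htrans : IsTrans (GAll w) (fun g g' => P (g⁻¹ * g')) := by
      constructor
      intro a b c hab hbc
      have := hPmul hab hbc
      rwa [show a⁻¹ * b * (b⁻¹ * c) = a⁻¹ * c by group] at this
    haveI : IsStrictOrder (GAll w) (fun g g' => P (g⁻¹ * g')) := ⟨⟩
    exact ⟨⟩
  · intro h g g' hgg'
    rwa [show (h * g)⁻¹ * (h * g') = g⁻¹ * g' by group]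
  · intro g
    show P ((1 : GAll w)⁻¹ * g) ↔ _
    rw [inv_one, one_mul]
    constructor
    · rintro ⟨x, hx, rfl⟩
      obtain ⟨u, rfl⟩ := exists_word w x
      refine ⟨u, ?_, phiM_coe w u⟩
      intro hu
      exact hx ((mall_eq_one_iff w).mpr hu)
    · rintro ⟨u, hu, rfl⟩
      refine ⟨toM w u, ?_, (phiM_coe w u).symm⟩
      intro hc
      exact hu ((mall_eq_one_iff w).mp hc)


end Stmt19
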